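/- Let (M^n, g) be a compact and connected Riemannian manifold of dimension n ≥ 2 admitting a 1-form α with ∇α = ψ g for some smooth function ψ ≢ 0 (a closed conformal Killing non-isometric 1-form). Then the following identity of 3-tensors holds: ψ d^∇ U*_g(ψ) = dψ ∧ U*_g(ψ) − ψ² d^∇ Ric^g + ( ψ d(Δψ) − (Δψ) dψ ) ∧ g. -/

import Mathlib

noncomputable section

open scoped Manifold
open Metric Module Finset

/-- The Euclidean model space `ℝⁿ`. -/
abbrev Euc (n : ℕ) : Type := EuclideanSpace ℝ (Fin n)

/-- Directional derivative of a real valued function on a manifold along a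
(trivialized) vector field, via `mfderiv`. -/
def dDeriv {n : ℕ} {M : Type} [TopologicalSpace M] [ChartedSpace (Euc n) M]
    (f : M → ℝ) (X : M → Euc n) (x : M) : ℝ :=
  mfderiv (𝓡 n) 𝓘(ℝ) f x (X x)

/-- Smoothness of a (trivialized) vector field. -/
def SmoothVF {n : ℕ} {M : Type} [TopologicalSpace M] [ChartedSpace (Euc n) M]
    (X : M → Euc n) : Prop :=
  ContMDiff (𝓡 n) 𝓘(ℝ, Euc n) (⊤ : ℕ∞) X

/-- Smoothness of a real valued function. -/
def SmoothFn {n : ℕ} {M : Type} [TopologicalSpace M] [ChartedSpace (Euc n) M]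
    (f : M → ℝ) : Prop :=
  ContMDiff (𝓡 n) 𝓘(ℝ) (⊤ : ℕ∞) f

/-- A Riemannian structure on a manifold `M` modelled on `ℝⁿ`, presented through a
(trivialized) tangent bundle `M × ℝⁿ`: a smooth metric `g`, its Levi-Civita
connection `conn` (characterized by being torsion free and metric), the Ricci
curvature `ric`, the scalar curvature `scal` and the positive Laplacian `lapl`
(the latter three characterized via `g`-orthonormal bases). -/
structure RiemannStructure (n : ℕ) (M : Type) [TopologicalSpace M]
    [ChartedSpace (Euc n) M] : Type where
  /-- the Riemannian metric -/
  g : M → Euc n → Euc n → ℝ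
  g_symm : ∀ x u v, g x u v = g x v u
  g_add_left : ∀ x u v w, g x (u + v) w = g x u w + g x v w
  g_smul_left : ∀ x (a : ℝ) u v, g x (a • u) v = a * g x u v
  g_posdef : ∀ x u, u ≠ 0 → 0 < g x u u
  g_smooth : ∀ X Y : M → Euc n, SmoothVF (n := n) X → SmoothVF (n := n) Y →
    SmoothFn (n := n) (fun x => g x (X x) (Y x))
  /-- the Levi-Civita covariant derivative on vector fields -/
  conn : (M → Euc n) → (M → Euc n) → M → Euc n
  conn_smooth : ∀ X Y, SmoothVF (n := n) X → SmoothVF (n := n) Y → SmoothVF (n := n) (conn X Y)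
  conn_tensor_fst : ∀ X X' Y x, X x = X' x → conn X Y x = conn X' Y x
  conn_add_fst : ∀ X X' Y x, conn (X + X') Y x = conn X Y x + conn X' Y x
  conn_add_snd : ∀ X Y Y', SmoothVF (n := n) Y → SmoothVF (n := n) Y' → ∀ x,
    conn X (Y + Y') x = conn X Y x + conn X Y' x
  conn_smul_fst : ∀ (f : M → ℝ) X Y x, conn (fun p => f p • X p) Y x = f x • conn X Y x
  conn_leibniz : ∀ (f : M → ℝ) X Y, SmoothFn (n := n) f → SmoothVF (n := n) Y → ∀ x,
    conn X (fun p => f p • Y p) x = dDeriv (n := n) f X x • Y x + f x • conn X Y x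
  /-- `∇` is torsion free : `∇_X Y - ∇_Y X = [X,Y]` acts on functions as the commutator -/
  conn_torsion_free : ∀ (f : M → ℝ) X Y, SmoothFn (n := n) f → SmoothVF (n := n) X → SmoothVF (n := n) Y → ∀ x,
    dDeriv (n := n) f (fun p => conn X Y p - conn Y X p) x
      = dDeriv (n := n) (dDeriv (n := n) f Y) X x - dDeriv (n := n) (dDeriv (n := n) f X) Y x
  /-- `∇` is metric : `X ⬝ g(Y,Z) = g(∇_X Y, Z) + g(Y, ∇_X Z)` -/
  conn_metric : ∀ X Y Z, SmoothVF (n := n) X → SmoothVF (n := n) Y → SmoothVF (n := n) Z → ∀ x,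
    dDeriv (n := n) (fun p => g p (Y p) (Z p)) X x
      = g x (conn X Y x) (Z x) + g x (Y x) (conn X Z x)
  /-- `g`-orthonormal bases exist at every point -/
  onb_exists : ∀ x : M, ∃ b : Fin n → Euc n,
    ∀ i j, g x (b i) (b j) = if i = j then (1 : ℝ) else 0
  /-- the Ricci curvature (as a pointwise 2-tensor) -/
  ric : M → Euc n → Euc n → ℝ
  /-- `Ric(X,Y) = ∑ᵢ g(R(eᵢ,X)Y, eᵢ)` for any `g`-orthonormal basis,
  where `R(X,Y)Z = ∇_X ∇_Y Z - ∇_Y ∇_X Z - ∇_[X,Y] Z` -/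
  ric_spec : ∀ (x : M) (b : Fin n → Euc n),
    (∀ i j, g x (b i) (b j) = if i = j then (1 : ℝ) else 0) →
    ∀ X Y : M → Euc n, SmoothVF (n := n) X → SmoothVF (n := n) Y →
    ric x (X x) (Y x) = ∑ i : Fin n,
      g x (conn (fun _ => b i) (conn X Y) x - conn X (conn (fun _ => b i) Y) x
        - conn (fun p => conn (fun _ => b i) X p - conn X (fun _ => b i) p) Y x) (b i)
  /-- the scalar curvature -/
  scal : M → ℝ
  scal_spec : ∀ (x : M) (b : Fin n → Euc n),
    (∀ i j, g x (b i) (b j) = if i = j then (1 : ℝ) else 0) →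
    scal x = ∑ i : Fin n, ric x (b i) (b i)
  /-- the positive Laplacian `Δ f = - tr_g Hess f` -/
  lapl : (M → ℝ) → M → ℝ
  lapl_spec : ∀ (f : M → ℝ), SmoothFn (n := n) f → ∀ (x : M) (b : Fin n → Euc n),
    (∀ i j, g x (b i) (b j) = if i = j then (1 : ℝ) else 0) →
    lapl f x = -∑ i : Fin n,
      (dDeriv (n := n) (dDeriv (n := n) f (fun _ => b i)) (fun _ => b i) x
        - dDeriv (n := n) f (conn (fun _ => b i) (fun _ => b i)) x)

namespace RiemannStructure

variable {n : ℕ} {M : Type} [TopologicalSpace M] [ChartedSpace (Euc n) M]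
  (G : RiemannStructure n M)

/-- The Riemann curvature operator `R(X,Y)Z = ∇_X ∇_Y Z - ∇_Y ∇_X Z - ∇_[X,Y] Z`. -/
def curv (X Y Z : M → Euc n) : M → Euc n := fun x =>
  G.conn X (G.conn Y Z) x - G.conn Y (G.conn X Z) x
    - G.conn (fun p => G.conn X Y p - G.conn Y X p) Z x

/-- The Hessian of a function, `Hess f (X,Y) = X ⬝ (Y ⬝ f) - (∇_X Y) ⬝ f`. -/
def hess (f : M → ℝ) (X Y : M → Euc n) : M → ℝ := fun x =>
  dDeriv (n := n) (dDeriv (n := n) f Y) X x - dDeriv (n := n) f (G.conn X Y) x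

/-- The operator `U_g^* (f) = Hess f - f Ric + (Δ f) g`. -/
def Ustar (f : M → ℝ) (X Y : M → Euc n) : M → ℝ := fun x =>
  G.hess f X Y x - f x * G.ric x (X x) (Y x) + G.lapl f x * G.g x (X x) (Y x)

/-- Covariant derivative of a 2-tensor along `X` :
`(∇_X S)(Y,Z) = X ⬝ S(Y,Z) - S(∇_X Y, Z) - S(Y, ∇_X Z)`. -/
def cov2 (S : (M → Euc n) → (M → Euc n) → M → ℝ) (X Y Z : M → Euc n) : M → ℝ := fun x =>
  dDeriv (n := n) (fun p => S Y Z p) X x - S (G.conn X Y) Z x - S Y (G.conn X Z) x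

/-- `d^∇ S (X,Y,Z) = (∇_X S)(Y,Z) - (∇_Y S)(X,Z)`. -/
def dnabla (S : (M → Euc n) → (M → Euc n) → M → ℝ) (X Y Z : M → Euc n) : M → ℝ := fun x =>
  G.cov2 S X Y Z x - G.cov2 S Y X Z x

/-- The Ricci curvature as a 2-tensor on vector fields. -/
def ricT : (M → Euc n) → (M → Euc n) → M → ℝ := fun X Y x => G.ric x (X x) (Y x)

/-- The Lie derivative of the metric along (the vector field dual to) a one-form `A` :
`(L_A g)(X,Y) = g(∇_X A, Y) + g(∇_Y A, X)`. -/
def lieg (A X Y : M → Euc n) : M → ℝ := fun x =>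
  G.g x (G.conn X A x) (Y x) + G.g x (G.conn Y A x) (X x)

end RiemannStructure

set_option linter.unusedSectionVars false

section Infra

variable {n : ℕ} {M : Type} [TopologicalSpace M] [ChartedSpace (Euc n) M]
  [IsManifold (𝓡 n) (⊤ : ℕ∞) M]

lemma smoothFn_mdiff {f : M → ℝ} (hf : SmoothFn (n := n) f) (x : M) :
    MDifferentiableAt (𝓡 n) 𝓘(ℝ) f x :=
  (hf x).mdifferentiableAt (by simp)

lemma smoothVF_const (v : Euc n) : SmoothVF (n := n) (fun _ : M => v) := contMDiff_const

lemma smoothFn_const (c : ℝ) : SmoothFn (n := n) (fun _ : M => c) := contMDiff_const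

lemma dDeriv_congr_field (f : M → ℝ) {X X' : M → Euc n} {x : M} (h : X x = X' x) :
    dDeriv (n := n) f X x = dDeriv (n := n) f X' x := by
  unfold dDeriv; rw [h]

lemma dDeriv_field_add (f : M → ℝ) (X Y : M → Euc n) (x : M) :
    dDeriv (n := n) f (fun p => X p + Y p) x
      = dDeriv (n := n) f X x + dDeriv (n := n) f Y x :=
  (mfderiv (𝓡 n) 𝓘(ℝ) f x).map_add (X x) (Y x)

lemma dDeriv_field_sub (f : M → ℝ) (X Y : M → Euc n) (x : M) :
    dDeriv (n := n) f (fun p => X p - Y p) x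
      = dDeriv (n := n) f X x - dDeriv (n := n) f Y x :=
  (mfderiv (𝓡 n) 𝓘(ℝ) f x).map_sub (X x) (Y x)

lemma dDeriv_field_smul (f : M → ℝ) (h : M → ℝ) (X : M → Euc n) (x : M) :
    dDeriv (n := n) f (fun p => h p • X p) x = h x * dDeriv (n := n) f X x := by
  unfold dDeriv
  exact (mfderiv (𝓡 n) 𝓘(ℝ) f x).map_smul (h x) (X x)

lemma dDeriv_field_sum {ι : Type} (f : M → ℝ) (s : Finset ι) (V : ι → M → Euc n) (x : M) :
    dDeriv (n := n) f (fun p => ∑ i ∈ s, V i p) x = ∑ i ∈ s, dDeriv (n := n) f (V i) x := by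
  classical
  induction s using Finset.induction with
  | empty =>
      simp only [Finset.sum_empty]
      exact (mfderiv (𝓡 n) 𝓘(ℝ) f x).map_zero
  | insert _ _ hni ih =>
      rename_i a s
      simp only [Finset.sum_insert hni]
      rw [dDeriv_field_add f (V a) (fun p => ∑ i ∈ s, V i p) x, ih]

lemma dDeriv_const (c : ℝ) (X : M → Euc n) (x : M) :
    dDeriv (n := n) (fun _ => c) X x = 0 := by
  unfold dDeriv
  rw [mfderiv_const]
  rfl

lemma dDeriv_add {f h : M → ℝ} {x : M} (X : M → Euc n)
    (hf : MDifferentiableAt (𝓡 n) 𝓘(ℝ) f x) (hh : MDifferentiableAt (𝓡 n) 𝓘(ℝ) h x) :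
    dDeriv (n := n) (fun p => f p + h p) X x
      = dDeriv (n := n) f X x + dDeriv (n := n) h X x := by
  have h1 := (hf.hasMFDerivAt.add hh.hasMFDerivAt).mfderiv
  unfold dDeriv
  rw [show (fun p => f p + h p) = f + h from rfl, h1]
  rfl

lemma dDeriv_sub {f h : M → ℝ} {x : M} (X : M → Euc n)
    (hf : MDifferentiableAt (𝓡 n) 𝓘(ℝ) f x) (hh : MDifferentiableAt (𝓡 n) 𝓘(ℝ) h x) :
    dDeriv (n := n) (fun p => f p - h p) X x
      = dDeriv (n := n) f X x - dDeriv (n := n) h X x := by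
  have h1 := (hf.hasMFDerivAt.sub hh.hasMFDerivAt).mfderiv
  unfold dDeriv
  rw [show (fun p => f p - h p) = f - h from rfl, h1]
  rfl

lemma dDeriv_mul {f h : M → ℝ} {x : M} (X : M → Euc n)
    (hf : MDifferentiableAt (𝓡 n) 𝓘(ℝ) f x) (hh : MDifferentiableAt (𝓡 n) 𝓘(ℝ) h x) :
    dDeriv (n := n) (fun p => f p * h p) X x
      = f x * dDeriv (n := n) h X x + h x * dDeriv (n := n) f X x := by
  have h1 := (hf.hasMFDerivAt.mul hh.hasMFDerivAt).mfderiv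
  unfold dDeriv
  rw [show (fun p => f p * h p) = f * h from rfl, h1]
  rfl

lemma dDeriv_eventually_zero {f : M → ℝ} {x : M} (h : f =ᶠ[nhds x] fun _ => (0 : ℝ))
    (X : M → Euc n) : dDeriv (n := n) f X x = 0 := by
  unfold dDeriv
  rw [h.mfderiv_eq, mfderiv_const]
  rfl

end Infra

section GLemmas

variable {n : ℕ} {M : Type} [TopologicalSpace M] [ChartedSpace (Euc n) M]
  [IsManifold (𝓡 n) (⊤ : ℕ∞) M] (G : RiemannStructure n M)

lemma g_zero_left (x : M) (v : Euc n) : G.g x 0 v = 0 := by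
  have := G.g_smul_left x 0 0 v
  simpa using this

lemma g_add_right (x : M) (u v w : Euc n) : G.g x u (v + w) = G.g x u v + G.g x u w := by
  rw [G.g_symm x u (v + w), G.g_add_left, G.g_symm x v u, G.g_symm x w u]

lemma g_smul_right (x : M) (a : ℝ) (u v : Euc n) : G.g x u (a • v) = a * G.g x u v := by
  rw [G.g_symm x u (a • v), G.g_smul_left, G.g_symm x v u]

lemma g_sub_right (x : M) (u v w : Euc n) : G.g x u (v - w) = G.g x u v - G.g x u w := by
  have h : v - w = v + (-1 : ℝ) • w := by simp [sub_eq_add_neg]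
  rw [h, g_add_right, g_smul_right]; ring

lemma g_sub_left (x : M) (u v w : Euc n) : G.g x (u - v) w = G.g x u w - G.g x v w := by
  rw [G.g_symm, g_sub_right, G.g_symm x w u, G.g_symm x w v]

lemma g_sum_left {ι : Type} (x : M) (s : Finset ι) (u : ι → Euc n) (v : Euc n) :
    G.g x (∑ i ∈ s, u i) v = ∑ i ∈ s, G.g x (u i) v := by
  classical
  induction s using Finset.induction with
  | empty => simpa using g_zero_left G x v
  | insert _ _ hni ih =>
      rename_i a s
      rw [Finset.sum_insert hni, G.g_add_left, ih, Finset.sum_insert hni]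

lemma g_sum_right {ι : Type} (x : M) (s : Finset ι) (u : Euc n) (v : ι → Euc n) :
    G.g x u (∑ i ∈ s, v i) = ∑ i ∈ s, G.g x u (v i) := by
  rw [G.g_symm, g_sum_left]
  exact Finset.sum_congr rfl fun i _ => G.g_symm x (v i) u

lemma conn_smul_const_snd (X Y : M → Euc n) (hY : SmoothVF (n := n) Y) (c : ℝ) (x : M) :
    G.conn X (fun p => c • Y p) x = c • G.conn X Y x := by
  have h := G.conn_leibniz (fun _ => c) X Y (smoothFn_const c) hY x
  rw [h, dDeriv_const, zero_smul, zero_add]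

lemma conn_sub_snd (X : M → Euc n) {Y Y' : M → Euc n} (hY : SmoothVF (n := n) Y)
    (hY' : SmoothVF (n := n) Y') (x : M) :
    G.conn X (fun p => Y p - Y' p) x = G.conn X Y x - G.conn X Y' x := by
  have e : (fun p => Y p - Y' p) = Y + (fun p => (-1 : ℝ) • Y' p) := by
    funext p; simp [sub_eq_add_neg]
  rw [e, G.conn_add_snd X Y (fun p => (-1 : ℝ) • Y' p) hY ((smoothFn_const (-1)).smul hY'),
    conn_smul_const_snd G X Y' hY' (-1)]
  simp [sub_eq_add_neg]

lemma smoothVF_sum {ι : Type} (s : Finset ι) (V : ι → M → Euc n)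
    (hV : ∀ i ∈ s, SmoothVF (n := n) (V i)) :
    SmoothVF (n := n) (fun p => ∑ i ∈ s, V i p) := by
  classical
  induction s using Finset.induction with
  | empty => simpa using smoothVF_const (n := n) (M := M) 0
  | insert _ _ hni ih =>
      rename_i a s
      have h1 : SmoothVF (n := n) (fun p => V a p + ∑ i ∈ s, V i p) :=
        (hV a (Finset.mem_insert_self a s)).add
          (ih fun i hi => hV i (Finset.mem_insert_of_mem hi))
      simpa [Finset.sum_insert hni] using h1

lemma conn_sum_snd {ι : Type} (X : M → Euc n) (s : Finset ι) (V : ι → M → Euc n)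
    (hV : ∀ i ∈ s, SmoothVF (n := n) (V i)) (x : M) :
    G.conn X (fun p => ∑ i ∈ s, V i p) x = ∑ i ∈ s, G.conn X (V i) x := by
  classical
  induction s using Finset.induction with
  | empty =>
      simp only [Finset.sum_empty]
      have h := conn_smul_const_snd G X (fun _ => (0 : Euc n)) (smoothVF_const 0) 0 x
      simpa using h
  | insert _ _ hni ih =>
      rename_i a s
      have e : (fun p => ∑ i ∈ insert a s, V i p)
          = V a + (fun p => ∑ i ∈ s, V i p) := by
        funext p; simp [Finset.sum_insert hni]
      rw [e, G.conn_add_snd X (V a) _ (hV a (Finset.mem_insert_self a s))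
        (smoothVF_sum s V fun i hi => hV i (Finset.mem_insert_of_mem hi)),
        ih fun i hi => hV i (Finset.mem_insert_of_mem hi), Finset.sum_insert hni]

lemma smoothFn_coord {X : M → Euc n} (hX : SmoothVF (n := n) X) (i : Fin n) :
    SmoothFn (n := n) (fun p => X p i) :=
  (EuclideanSpace.proj (𝕜 := ℝ) i).contMDiff.comp hX

lemma euc_decomp (u : Euc n) :
    ∑ i, (u i) • (EuclideanSpace.single i (1 : ℝ)) = u := by
  refine PiLp.ext fun j => ?_
  rw [show (∑ i, (u i) • (EuclideanSpace.single i (1 : ℝ))) j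
      = ∑ i, ((u i) • (EuclideanSpace.single i (1 : ℝ))) j from by rw [WithLp.ofLp_sum, Finset.sum_apply]]
  simp [EuclideanSpace.single_apply]

include G in
/-- The key smoothness lemma : `X ⬝ f` is smooth, because every smooth function is
of the form `g(Y,Z)` and the connection is metric and smooth. -/
lemma smooth_dDeriv (hn : 0 < n) {f : M → ℝ} {X : M → Euc n}
    (hf : SmoothFn (n := n) f) (hX : SmoothVF (n := n) X) :
    SmoothFn (n := n) (dDeriv (n := n) f X) := by
  have he1ne : (EuclideanSpace.single (⟨0, hn⟩ : Fin n) (1 : ℝ)) ≠ 0 := by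
    intro h
    have h2 := congrArg (fun v : Euc n => v ⟨0, hn⟩) h
    simp [EuclideanSpace.single_apply] at h2
  let e1 : Euc n := EuclideanSpace.single (⟨0, hn⟩ : Fin n) (1 : ℝ)
  have hus : SmoothFn (n := n) (fun x => G.g x e1 e1) :=
    G.g_smooth _ _ (smoothVF_const e1) (smoothVF_const e1)
  have hune : ∀ x, G.g x e1 e1 ≠ 0 := fun x => ne_of_gt (G.g_posdef x e1 he1ne)
  have hYs : SmoothVF (n := n) (fun p => (f p / G.g p e1 e1) • e1) :=
    (hf.div₀ hus hune).smul (smoothVF_const e1)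
  have hfY : f = fun p => G.g p ((f p / G.g p e1 e1) • e1) ((fun _ => e1) p) := by
    funext p
    show f p = G.g p ((f p / G.g p e1 e1) • e1) e1
    rw [G.g_smul_left, div_mul_cancel₀ _ (hune p)]
  have heq : dDeriv (n := n) f X = fun x =>
      G.g x (G.conn X (fun p => (f p / G.g p e1 e1) • e1) x) e1
        + G.g x ((f x / G.g x e1 e1) • e1) (G.conn X (fun _ => e1) x) := by
    funext x
    conv_lhs => rw [hfY]
    exact G.conn_metric X _ (fun _ => e1) hX hYs (smoothVF_const e1) x
  rw [heq]
  exact (G.g_smooth _ _ (G.conn_smooth X _ hX hYs) (smoothVF_const e1)).add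
    (G.g_smooth _ _ hYs (G.conn_smooth X _ hX (smoothVF_const e1)))

lemma smoothFn_mul' {f h : M → ℝ} (hf : SmoothFn (n := n) f) (hh : SmoothFn (n := n) h) :
    SmoothFn (n := n) (fun p => f p * h p) := hf.mul hh

lemma smoothFn_add' {f h : M → ℝ} (hf : SmoothFn (n := n) f) (hh : SmoothFn (n := n) h) :
    SmoothFn (n := n) (fun p => f p + h p) := hf.add hh

lemma smoothFn_sub' {f h : M → ℝ} (hf : SmoothFn (n := n) f) (hh : SmoothFn (n := n) h) :
    SmoothFn (n := n) (fun p => f p - h p) := hf.sub hh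

end GLemmas

section Chain

variable {n : ℕ} {M : Type} [TopologicalSpace M] [ChartedSpace (Euc n) M]
  [IsManifold (𝓡 n) (⊤ : ℕ∞) M] (G : RiemannStructure n M)
  {ψ : M → ℝ} {A : M → Euc n}

/-- rearranged definition of the Hessian -/
lemma hess_def' (f : M → ℝ) (V W : M → Euc n) (x : M) :
    dDeriv (n := n) (dDeriv (n := n) f W) V x
      = G.hess f V W x + dDeriv (n := n) f (G.conn V W) x := by
  show _ = (dDeriv (n := n) (dDeriv (n := n) f W) V x
    - dDeriv (n := n) f (G.conn V W) x) + dDeriv (n := n) f (G.conn V W) x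
  ring

lemma smooth_hess (hn : 0 < n) {f : M → ℝ} {X Y : M → Euc n} (hf : SmoothFn (n := n) f)
    (hX : SmoothVF (n := n) X) (hY : SmoothVF (n := n) Y) :
    SmoothFn (n := n) (G.hess f X Y) :=
  (smooth_dDeriv G hn (smooth_dDeriv G hn hf hY) hX).sub
    (smooth_dDeriv G hn hf (G.conn_smooth X Y hX hY))

lemma hess_symm {f : M → ℝ} {X Y : M → Euc n} (hf : SmoothFn (n := n) f)
    (hX : SmoothVF (n := n) X) (hY : SmoothVF (n := n) Y) (x : M) :
    G.hess f X Y x = G.hess f Y X x := by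
  have ht := G.conn_torsion_free f X Y hf hX hY x
  rw [dDeriv_field_sub] at ht
  show dDeriv (n := n) (dDeriv (n := n) f Y) X x - dDeriv (n := n) f (G.conn X Y) x
    = dDeriv (n := n) (dDeriv (n := n) f X) Y x - dDeriv (n := n) f (G.conn Y X) x
  linarith

/-- derivative of `α(Y) = g(A, Y)` -/
lemma d_alpha (hAs : SmoothVF (n := n) A)
    (hcc : ∀ (X : M → Euc n) (x : M), G.conn X A x = ψ x • X x)
    {X Y : M → Euc n} (hX : SmoothVF (n := n) X) (hY : SmoothVF (n := n) Y) (x : M) :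
    dDeriv (n := n) (fun p => G.g p (A p) (Y p)) X x
      = ψ x * G.g x (X x) (Y x) + G.g x (A x) (G.conn X Y x) := by
  have h := G.conn_metric X A Y hX hAs hY x
  rw [h, hcc X x, G.g_smul_left]

/-- derivative of `a = g(A,A)` along an arbitrary field -/
lemma d_normsq (hAs : SmoothVF (n := n) A)
    (hcc : ∀ (X : M → Euc n) (x : M), G.conn X A x = ψ x • X x)
    (V : M → Euc n) (x : M) :
    dDeriv (n := n) (fun p => G.g p (A p) (A p)) V x
      = 2 * (ψ x * G.g x (A x) (V x)) := by
  have h0 : dDeriv (n := n) (fun p => G.g p (A p) (A p)) V x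
      = dDeriv (n := n) (fun p => G.g p (A p) (A p)) (fun _ => V x) x :=
    dDeriv_congr_field _ rfl
  rw [h0, d_alpha G hAs hcc (smoothVF_const (V x)) hAs x, hcc]
  rw [g_smul_right, G.g_symm x (V x) (A x)]
  ring

/-- `dψ ∧ α = 0` -/
lemma wedge0 (hψs : SmoothFn (n := n) ψ) (hAs : SmoothVF (n := n) A)
    (hcc : ∀ (X : M → Euc n) (x : M), G.conn X A x = ψ x • X x)
    {X Y : M → Euc n} (hX : SmoothVF (n := n) X) (hY : SmoothVF (n := n) Y) (x : M) :
    dDeriv (n := n) ψ X x * G.g x (A x) (Y x)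
      = dDeriv (n := n) ψ Y x * G.g x (A x) (X x) := by
  have hgAA : SmoothFn (n := n) (fun p => G.g p (A p) (A p)) := G.g_smooth A A hAs hAs
  -- compute the second derivatives of a = g(A,A)
  have key : ∀ (P Q : M → Euc n), SmoothVF (n := n) P → SmoothVF (n := n) Q →
      dDeriv (n := n) (dDeriv (n := n) (fun p => G.g p (A p) (A p)) Q) P x
      = 2 * (ψ x * (ψ x * G.g x (P x) (Q x) + G.g x (A x) (G.conn P Q x)))
        + 2 * (G.g x (A x) (Q x)) * dDeriv (n := n) ψ P x := by
    intro P Q hP hQ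
    have e1 : dDeriv (n := n) (fun p => G.g p (A p) (A p)) Q
        = fun p => ψ p * (2 * G.g p (A p) (Q p)) := by
      funext p
      rw [d_normsq G hAs hcc Q p]; ring
    rw [e1, dDeriv_mul (f := ψ) (h := fun p => 2 * G.g p (A p) (Q p)) P
      (smoothFn_mdiff hψs x)
      (smoothFn_mdiff (smoothFn_mul' (smoothFn_const 2) (G.g_smooth A Q hAs hQ)) x)]
    have e2 : dDeriv (n := n) (fun p => 2 * G.g p (A p) (Q p)) P x
        = 2 * dDeriv (n := n) (fun p => G.g p (A p) (Q p)) P x := by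
      rw [dDeriv_mul (f := fun _ => (2:ℝ)) (h := fun p => G.g p (A p) (Q p)) P
        (smoothFn_mdiff (smoothFn_const 2) x) (smoothFn_mdiff (G.g_smooth A Q hAs hQ) x),
        dDeriv_const]; ring
    rw [e2, d_alpha G hAs hcc hP hQ x]
    ring
  have ht := G.conn_torsion_free (fun p => G.g p (A p) (A p)) X Y hgAA hX hY x
  rw [dDeriv_field_sub] at ht
  rw [key Y X hY hX, key X Y hX hY, d_normsq G hAs hcc (G.conn X Y) x,
    d_normsq G hAs hcc (G.conn Y X) x] at ht
  have hgs : G.g x (X x) (Y x) = G.g x (Y x) (X x) := G.g_symm x (X x) (Y x)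
  linear_combination (-1/2 : ℝ) * ht - ψ x ^ 2 * hgs

end Chain

section Chain2

variable {n : ℕ} {M : Type} [TopologicalSpace M] [ChartedSpace (Euc n) M]
  [IsManifold (𝓡 n) (⊤ : ℕ∞) M] (G : RiemannStructure n M)
  {ψ : M → ℝ} {A : M → Euc n}

/-- L3 : the derivative of `dψ ∧ α = 0`. -/
lemma hess_wedge (hn : 0 < n) (hψs : SmoothFn (n := n) ψ) (hAs : SmoothVF (n := n) A)
    (hcc : ∀ (X : M → Euc n) (x : M), G.conn X A x = ψ x • X x)
    {W X Y : M → Euc n} (hW : SmoothVF (n := n) W) (hX : SmoothVF (n := n) X)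
    (hY : SmoothVF (n := n) Y) (x : M) :
    G.hess ψ W X x * G.g x (A x) (Y x) + ψ x * dDeriv (n := n) ψ X x * G.g x (W x) (Y x)
      = G.hess ψ W Y x * G.g x (A x) (X x)
        + ψ x * dDeriv (n := n) ψ Y x * G.g x (W x) (X x) := by
  have hfun : (fun p => dDeriv (n := n) ψ X p * G.g p (A p) (Y p))
      = (fun p => dDeriv (n := n) ψ Y p * G.g p (A p) (X p)) :=
    funext fun p => wedge0 G hψs hAs hcc hX hY p
  have h1 : dDeriv (n := n) (fun p => dDeriv (n := n) ψ X p * G.g p (A p) (Y p)) W x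
      = dDeriv (n := n) (fun p => dDeriv (n := n) ψ Y p * G.g p (A p) (X p)) W x := by
    rw [hfun]
  rw [dDeriv_mul (f := dDeriv (n := n) ψ X) (h := fun p => G.g p (A p) (Y p)) W
      (smoothFn_mdiff (smooth_dDeriv G hn hψs hX) x)
      (smoothFn_mdiff (G.g_smooth A Y hAs hY) x),
    dDeriv_mul (f := dDeriv (n := n) ψ Y) (h := fun p => G.g p (A p) (X p)) W
      (smoothFn_mdiff (smooth_dDeriv G hn hψs hY) x)
      (smoothFn_mdiff (G.g_smooth A X hAs hX) x),
    d_alpha G hAs hcc hW hY x, d_alpha G hAs hcc hW hX x,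
    hess_def' G ψ W X x, hess_def' G ψ W Y x] at h1
  have w1 := wedge0 G hψs hAs hcc hX (G.conn_smooth W Y hW hY) x
  have w2 := wedge0 G hψs hAs hcc hY (G.conn_smooth W X hW hX) x
  linear_combination h1 - w1 + w2

/-- Hessian of ψ with second argument A. -/
lemma hess_A (hcc : ∀ (X : M → Euc n) (x : M), G.conn X A x = ψ x • X x)
    (W : M → Euc n) (x : M) :
    G.hess ψ W A x
      = dDeriv (n := n) (dDeriv (n := n) ψ A) W x - ψ x * dDeriv (n := n) ψ W x := by
  show dDeriv (n := n) (dDeriv (n := n) ψ A) W x - dDeriv (n := n) ψ (G.conn W A) x = _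
  rw [dDeriv_congr_field (n := n) ψ (X := G.conn W A) (X' := fun p => ψ p • W p) (x := x) (hcc W x),
    dDeriv_field_smul]

/-- L8' : the fundamental pointwise formula for `a · Hess ψ`. -/
lemma aH (hn : 0 < n) (hψs : SmoothFn (n := n) ψ) (hAs : SmoothVF (n := n) A)
    (hcc : ∀ (X : M → Euc n) (x : M), G.conn X A x = ψ x • X x)
    {W X : M → Euc n} (hW : SmoothVF (n := n) W) (hX : SmoothVF (n := n) X) (x : M) :
    G.g x (A x) (A x) * G.hess ψ W X x
      = G.g x (A x) (X x)
          * (dDeriv (n := n) (dDeriv (n := n) ψ A) W x - ψ x * dDeriv (n := n) ψ W x)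
        + ψ x * dDeriv (n := n) ψ A x * G.g x (W x) (X x)
        - ψ x * dDeriv (n := n) ψ X x * G.g x (A x) (W x) := by
  have h := hess_wedge G hn hψs hAs hcc hW hX hAs x
  rw [hess_A G hcc W x] at h
  have hgs : G.g x (W x) (A x) = G.g x (A x) (W x) := G.g_symm x (W x) (A x)
  linear_combination h - ψ x * dDeriv (n := n) ψ X x * hgs

end Chain2

section Chain3

variable {n : ℕ} {M : Type} [TopologicalSpace M] [ChartedSpace (Euc n) M]
  [IsManifold (𝓡 n) (⊤ : ℕ∞) M] (G : RiemannStructure n M)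
  {ψ : M → ℝ} {A : M → Euc n}

/-- L6 : `a · d^∇ Hess ψ = dψ(A) · (dψ ∧ g)`. -/
lemma a_dnabla_hess (hn : 0 < n) (hψs : SmoothFn (n := n) ψ) (hAs : SmoothVF (n := n) A)
    (hcc : ∀ (X : M → Euc n) (x : M), G.conn X A x = ψ x • X x)
    {V W Z : M → Euc n} (hV : SmoothVF (n := n) V) (hW : SmoothVF (n := n) W)
    (hZ : SmoothVF (n := n) Z) (x : M) :
    G.g x (A x) (A x) * G.dnabla (G.hess ψ) V W Z x
      = dDeriv (n := n) ψ A x * (dDeriv (n := n) ψ V x * G.g x (W x) (Z x)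
          - dDeriv (n := n) ψ W x * G.g x (V x) (Z x)) := by
  have sφ : SmoothFn (n := n) (dDeriv (n := n) ψ A) := smooth_dDeriv G hn hψs hAs
  -- the expansion of `a ⬝ ∂_P (Hess ψ (Q,Z))`
  have main : ∀ P Q : M → Euc n, SmoothVF (n := n) P → SmoothVF (n := n) Q →
      G.g x (A x) (A x) * dDeriv (n := n) (fun p => G.hess ψ Q Z p) P x
      = G.g x (A x) (Z x) * (dDeriv (n := n) (dDeriv (n := n) (dDeriv (n := n) ψ A) Q) P x
            - ψ x * (G.hess ψ P Q x + dDeriv (n := n) ψ (G.conn P Q) x)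
            - dDeriv (n := n) ψ Q x * dDeriv (n := n) ψ P x)
        + (dDeriv (n := n) (dDeriv (n := n) ψ A) Q x - ψ x * dDeriv (n := n) ψ Q x)
            * (ψ x * G.g x (P x) (Z x) + G.g x (A x) (G.conn P Z x))
        + ψ x * dDeriv (n := n) ψ A x
            * (G.g x (G.conn P Q x) (Z x) + G.g x (Q x) (G.conn P Z x))
        + G.g x (Q x) (Z x) * (ψ x * dDeriv (n := n) (dDeriv (n := n) ψ A) P x
            + dDeriv (n := n) ψ A x * dDeriv (n := n) ψ P x)
        - ψ x * dDeriv (n := n) ψ Z x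
            * (ψ x * G.g x (P x) (Q x) + G.g x (A x) (G.conn P Q x))
        - G.g x (A x) (Q x) * (ψ x * (G.hess ψ P Z x + dDeriv (n := n) ψ (G.conn P Z) x)
            + dDeriv (n := n) ψ Z x * dDeriv (n := n) ψ P x)
        - G.hess ψ Q Z x * (2 * (ψ x * G.g x (A x) (P x))) := by
    intro P Q hP hQ
    have sDφQ : SmoothFn (n := n) (dDeriv (n := n) (dDeriv (n := n) ψ A) Q) :=
      smooth_dDeriv G hn sφ hQ
    have sdψQ : SmoothFn (n := n) (dDeriv (n := n) ψ Q) := smooth_dDeriv G hn hψs hQ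
    have sdψZ : SmoothFn (n := n) (dDeriv (n := n) ψ Z) := smooth_dDeriv G hn hψs hZ
    have sαZ : SmoothFn (n := n) (fun p => G.g p (A p) (Z p)) := G.g_smooth A Z hAs hZ
    have sαQ : SmoothFn (n := n) (fun p => G.g p (A p) (Q p)) := G.g_smooth A Q hAs hQ
    have sgQZ : SmoothFn (n := n) (fun p => G.g p (Q p) (Z p)) := G.g_smooth Q Z hQ hZ
    have st1 : SmoothFn (n := n) (fun p => G.g p (A p) (Z p)
        * (dDeriv (n := n) (dDeriv (n := n) ψ A) Q p - ψ p * dDeriv (n := n) ψ Q p)) :=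
      smoothFn_mul' sαZ (smoothFn_sub' sDφQ (smoothFn_mul' hψs sdψQ))
    have st2 : SmoothFn (n := n)
        (fun p => ψ p * dDeriv (n := n) ψ A p * G.g p (Q p) (Z p)) :=
      smoothFn_mul' (smoothFn_mul' hψs sφ) sgQZ
    have st3 : SmoothFn (n := n)
        (fun p => ψ p * dDeriv (n := n) ψ Z p * G.g p (A p) (Q p)) :=
      smoothFn_mul' (smoothFn_mul' hψs sdψZ) sαQ
    have hfun : (fun p => G.g p (A p) (A p) * G.hess ψ Q Z p)
        = (fun p => G.g p (A p) (Z p)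
              * (dDeriv (n := n) (dDeriv (n := n) ψ A) Q p - ψ p * dDeriv (n := n) ψ Q p)
            + ψ p * dDeriv (n := n) ψ A p * G.g p (Q p) (Z p)
            - ψ p * dDeriv (n := n) ψ Z p * G.g p (A p) (Q p)) := by
      funext p
      exact aH G hn hψs hAs hcc hQ hZ p
    have h0 : dDeriv (n := n) (fun p => G.g p (A p) (A p) * G.hess ψ Q Z p) P x
        = dDeriv (n := n) (fun p => G.g p (A p) (Z p)
              * (dDeriv (n := n) (dDeriv (n := n) ψ A) Q p - ψ p * dDeriv (n := n) ψ Q p)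
            + ψ p * dDeriv (n := n) ψ A p * G.g p (Q p) (Z p)
            - ψ p * dDeriv (n := n) ψ Z p * G.g p (A p) (Q p)) P x := by
      rw [hfun]
    have hL : dDeriv (n := n) (fun p => G.g p (A p) (A p) * G.hess ψ Q Z p) P x
        = G.g x (A x) (A x) * dDeriv (n := n) (fun p => G.hess ψ Q Z p) P x
          + G.hess ψ Q Z x * (2 * (ψ x * G.g x (A x) (P x))) := by
      rw [dDeriv_mul (f := fun p => G.g p (A p) (A p)) (h := fun p => G.hess ψ Q Z p) P
          (smoothFn_mdiff (G.g_smooth A A hAs hAs) x)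
          (smoothFn_mdiff (smooth_hess G hn hψs hQ hZ) x),
        d_normsq G hAs hcc P x]
    have hR : dDeriv (n := n) (fun p => G.g p (A p) (Z p)
          * (dDeriv (n := n) (dDeriv (n := n) ψ A) Q p - ψ p * dDeriv (n := n) ψ Q p)
        + ψ p * dDeriv (n := n) ψ A p * G.g p (Q p) (Z p)
        - ψ p * dDeriv (n := n) ψ Z p * G.g p (A p) (Q p)) P x
        = G.g x (A x) (Z x) * (dDeriv (n := n) (dDeriv (n := n) (dDeriv (n := n) ψ A) Q) P x
              - ψ x * (G.hess ψ P Q x + dDeriv (n := n) ψ (G.conn P Q) x)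
              - dDeriv (n := n) ψ Q x * dDeriv (n := n) ψ P x)
          + (dDeriv (n := n) (dDeriv (n := n) ψ A) Q x - ψ x * dDeriv (n := n) ψ Q x)
              * (ψ x * G.g x (P x) (Z x) + G.g x (A x) (G.conn P Z x))
          + ψ x * dDeriv (n := n) ψ A x
              * (G.g x (G.conn P Q x) (Z x) + G.g x (Q x) (G.conn P Z x))
          + G.g x (Q x) (Z x) * (ψ x * dDeriv (n := n) (dDeriv (n := n) ψ A) P x
              + dDeriv (n := n) ψ A x * dDeriv (n := n) ψ P x)
          - ψ x * dDeriv (n := n) ψ Z x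
              * (ψ x * G.g x (P x) (Q x) + G.g x (A x) (G.conn P Q x))
          - G.g x (A x) (Q x) * (ψ x * (G.hess ψ P Z x + dDeriv (n := n) ψ (G.conn P Z) x)
              + dDeriv (n := n) ψ Z x * dDeriv (n := n) ψ P x) := by
      rw [dDeriv_sub P (smoothFn_mdiff (smoothFn_add' st1 st2) x) (smoothFn_mdiff st3 x),
        dDeriv_add P (smoothFn_mdiff st1 x) (smoothFn_mdiff st2 x),
        dDeriv_mul (f := fun p => G.g p (A p) (Z p))
          (h := fun p => dDeriv (n := n) (dDeriv (n := n) ψ A) Q p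
            - ψ p * dDeriv (n := n) ψ Q p) P
          (smoothFn_mdiff sαZ x)
          (smoothFn_mdiff (smoothFn_sub' sDφQ (smoothFn_mul' hψs sdψQ)) x),
        dDeriv_mul (f := fun p => ψ p * dDeriv (n := n) ψ A p)
          (h := fun p => G.g p (Q p) (Z p)) P
          (smoothFn_mdiff (smoothFn_mul' hψs sφ) x) (smoothFn_mdiff sgQZ x),
        dDeriv_mul (f := fun p => ψ p * dDeriv (n := n) ψ Z p)
          (h := fun p => G.g p (A p) (Q p)) P
          (smoothFn_mdiff (smoothFn_mul' hψs sdψZ) x) (smoothFn_mdiff sαQ x),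
        dDeriv_sub P (smoothFn_mdiff sDφQ x) (smoothFn_mdiff (smoothFn_mul' hψs sdψQ) x),
        dDeriv_mul (f := ψ) (h := dDeriv (n := n) ψ Q) P
          (smoothFn_mdiff hψs x) (smoothFn_mdiff sdψQ x),
        dDeriv_mul (f := ψ) (h := dDeriv (n := n) ψ A) P
          (smoothFn_mdiff hψs x) (smoothFn_mdiff sφ x),
        dDeriv_mul (f := ψ) (h := dDeriv (n := n) ψ Z) P
          (smoothFn_mdiff hψs x) (smoothFn_mdiff sdψZ x),
        d_alpha G hAs hcc hP hZ x, d_alpha G hAs hcc hP hQ x,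
        G.conn_metric P Q Z hP hQ hZ x,
        hess_def' G ψ P Q x, hess_def' G ψ P Z x]
      ring
    linear_combination h0 - hL + hR
  have mV := main V W hV hW
  have mW := main W V hW hV
  have tφ := G.conn_torsion_free (dDeriv (n := n) ψ A) V W sφ hV hW x
  rw [dDeriv_field_sub] at tφ
  have e_p := aH G hn hψs hAs hcc (G.conn_smooth V W hV hW) hZ x
  have e_q := aH G hn hψs hAs hcc (G.conn_smooth W V hW hV) hZ x
  have e_r := aH G hn hψs hAs hcc hW (G.conn_smooth V Z hV hZ) x
  have e_t := aH G hn hψs hAs hcc hV (G.conn_smooth W Z hW hZ) x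
  have w_r := wedge0 G hψs hAs hcc (G.conn_smooth V Z hV hZ) hW x
  have w_t := wedge0 G hψs hAs hcc (G.conn_smooth W Z hW hZ) hV x
  have s1 := hess_wedge G hn hψs hAs hcc hZ hW hV x
  have hsZW := hess_symm G hψs hZ hW x
  have hsZV := hess_symm G hψs hZ hV x
  have hsVW := hess_symm G hψs hV hW x
  have w_wv := wedge0 G hψs hAs hcc hW hV x
  have gsZV := G.g_symm x (Z x) (V x)
  have gsZW := G.g_symm x (Z x) (W x)
  have gsVW := G.g_symm x (V x) (W x)
  show G.g x (A x) (A x) * ((dDeriv (n := n) (fun p => G.hess ψ W Z p) V x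
      - G.hess ψ (G.conn V W) Z x - G.hess ψ W (G.conn V Z) x)
    - (dDeriv (n := n) (fun p => G.hess ψ V Z p) W x
      - G.hess ψ (G.conn W V) Z x - G.hess ψ V (G.conn W Z) x)) = _
  linear_combination mV - mW - e_p + e_q - e_r + e_t
    - G.g x (A x) (Z x) * tφ
    - ψ x * G.g x (A x) (Z x) * hsVW
    - ψ x * s1
    + ψ x * G.g x (A x) (V x) * hsZW
    - ψ x * G.g x (A x) (W x) * hsZV
    + ψ x ^ 2 * dDeriv (n := n) ψ W x * gsZV
    - ψ x ^ 2 * dDeriv (n := n) ψ V x * gsZW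
    - ψ x ^ 2 * dDeriv (n := n) ψ Z x * gsVW
    + dDeriv (n := n) ψ Z x * w_wv

end Chain3

section Chain4

variable {n : ℕ} {M : Type} [TopologicalSpace M] [ChartedSpace (Euc n) M]
  [IsManifold (𝓡 n) (⊤ : ℕ∞) M] (G : RiemannStructure n M)
  {ψ : M → ℝ} {A : M → Euc n}

/-- If `A` vanishes near `p`, then `ψ p = 0`. -/
lemma psi_zero_of_A_loc_zero (hn : 0 < n) (hAs : SmoothVF (n := n) A)
    (hcc : ∀ (X : M → Euc n) (x : M), G.conn X A x = ψ x • X x)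
    {p : M} (hA0 : ∀ᶠ q in nhds p, A q = 0) : ψ p = 0 := by
  have he1ne : (EuclideanSpace.single (⟨0, hn⟩ : Fin n) (1 : ℝ)) ≠ 0 := by
    intro h
    have h2 := congrArg (fun v : Euc n => v ⟨0, hn⟩) h
    simp [EuclideanSpace.single_apply] at h2
  have hAdec : A = fun q => ∑ i : Fin n, (A q i) • (EuclideanSpace.single i (1 : ℝ)) :=
    funext fun q => (euc_decomp (A q)).symm
  have hconn0 : G.conn (fun _ => EuclideanSpace.single (⟨0, hn⟩ : Fin n) (1 : ℝ)) A p = 0 := by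
    conv_lhs => rw [hAdec]
    rw [conn_sum_snd G _ Finset.univ
      (fun i => fun q => (A q i) • (EuclideanSpace.single i (1 : ℝ)))
      (fun i _ => (smoothFn_coord hAs i).smul (smoothVF_const _)) p]
    refine Finset.sum_eq_zero fun i _ => ?_
    rw [G.conn_leibniz (fun q => A q i) _ (fun _ => EuclideanSpace.single i (1 : ℝ))
      (smoothFn_coord hAs i) (smoothVF_const _) p]
    have hcoord0 : (fun q => A q i) =ᶠ[nhds p] fun _ => (0 : ℝ) :=
      hA0.mono fun q hq => by show A q i = 0; rw [hq]; rfl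
    rw [dDeriv_eventually_zero hcoord0]
    have hApi : A p i = 0 := by have h := hA0.self_of_nhds; rw [h]; rfl
    rw [hApi]
    simp
  have := hcc (fun _ => EuclideanSpace.single (⟨0, hn⟩ : Fin n) (1 : ℝ)) p
  rw [hconn0] at this
  rcases smul_eq_zero.mp this.symm with h | h
  · exact h
  · exact absurd h he1ne

/-- Statement (★) : `ψ · d^∇ Hess ψ = dψ ∧ Hess ψ`, everywhere. -/
lemma star_all (hn : 0 < n) (hψs : SmoothFn (n := n) ψ) (hAs : SmoothVF (n := n) A)
    (hcc : ∀ (X : M → Euc n) (x : M), G.conn X A x = ψ x • X x)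
    {X Y Z : M → Euc n} (hX : SmoothVF (n := n) X) (hY : SmoothVF (n := n) Y)
    (hZ : SmoothVF (n := n) Z) (x : M) :
    ψ x * G.dnabla (G.hess ψ) X Y Z x
      = dDeriv (n := n) ψ X x * G.hess ψ Y Z x
        - dDeriv (n := n) ψ Y x * G.hess ψ X Z x := by
  set D : M → ℝ := fun p => ψ p * G.dnabla (G.hess ψ) X Y Z p
    - (dDeriv (n := n) ψ X p * G.hess ψ Y Z p
        - dDeriv (n := n) ψ Y p * G.hess ψ X Z p) with hD
  have scov2 : ∀ (P Q : M → Euc n), SmoothVF (n := n) P → SmoothVF (n := n) Q →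
      SmoothFn (n := n) (G.cov2 (G.hess ψ) P Q Z) := fun P Q hP hQ =>
    ((smooth_dDeriv G hn (smooth_hess G hn hψs hQ hZ) hP).sub
      (smooth_hess G hn hψs (G.conn_smooth P Q hP hQ) hZ)).sub
      (smooth_hess G hn hψs hQ (G.conn_smooth P Z hP hZ))
  have sdn : SmoothFn (n := n) (G.dnabla (G.hess ψ) X Y Z) :=
    (scov2 X Y hX hY).sub (scov2 Y X hY hX)
  have sD : SmoothFn (n := n) D :=
    smoothFn_sub' (smoothFn_mul' hψs sdn)
      (smoothFn_sub'
        (smoothFn_mul' (smooth_dDeriv G hn hψs hX) (smooth_hess G hn hψs hY hZ))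
        (smoothFn_mul' (smooth_dDeriv G hn hψs hY) (smooth_hess G hn hψs hX hZ)))
  have key : ∀ p : M, A p ≠ 0 → D p = 0 := by
    intro p hap
    have ha : G.g p (A p) (A p) ≠ 0 := ne_of_gt (G.g_posdef p (A p) hap)
    have hL6 := a_dnabla_hess G hn hψs hAs hcc hX hY hZ p
    have s1 := hess_wedge G hn hψs hAs hcc hZ hX hY p
    have hsZX := hess_symm G hψs hZ hX p
    have hsZY := hess_symm G hψs hZ hY p
    have gsZX := G.g_symm p (Z p) (X p)
    have gsZY := G.g_symm p (Z p) (Y p)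
    have hwX := wedge0 G hψs hAs hcc hX hAs p
    have hwY := wedge0 G hψs hAs hcc hY hAs p
    have hDa : G.g p (A p) (A p) * D p = 0 := by
      rw [hD]
      linear_combination ψ p * hL6 - G.hess ψ Y Z p * hwX + G.hess ψ X Z p * hwY
        + dDeriv (n := n) ψ A p * s1
        - dDeriv (n := n) ψ A p * G.g p (A p) (Y p) * hsZX
        + dDeriv (n := n) ψ A p * G.g p (A p) (X p) * hsZY
        - dDeriv (n := n) ψ A p * ψ p * dDeriv (n := n) ψ X p * gsZY
        + dDeriv (n := n) ψ A p * ψ p * dDeriv (n := n) ψ Y p * gsZX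
    exact (mul_eq_zero.mp hDa).resolve_left ha
  have key2 : ∀ p ∈ interior {q : M | A q = 0}, D p = 0 := by
    intro p hp
    have hψ0 : ∀ q ∈ interior {q : M | A q = 0}, ψ q = 0 := fun q hq =>
      psi_zero_of_A_loc_zero G hn hAs hcc
        (mem_interior_iff_mem_nhds.mp hq)
    have hψev : ψ =ᶠ[nhds p] fun _ => (0 : ℝ) :=
      Filter.eventually_iff_exists_mem.mpr
        ⟨interior {q : M | A q = 0}, isOpen_interior.mem_nhds hp, hψ0⟩
    have h1 : ψ p = 0 := hψ0 p hp
    have h2 : dDeriv (n := n) ψ X p = 0 := dDeriv_eventually_zero hψev X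
    have h3 : dDeriv (n := n) ψ Y p = 0 := dDeriv_eventually_zero hψev Y
    rw [hD]
    simp only [h1, h2, h3]
    ring
  have hdense : Dense ({p : M | A p ≠ 0} ∪ interior {q : M | A q = 0}) := by
    rw [dense_iff_inter_open]
    intro U hU hne
    obtain ⟨u, hu⟩ := hne
    by_cases hA : ∃ v ∈ U, A v ≠ 0
    · obtain ⟨v, hvU, hv⟩ := hA
      exact ⟨v, hvU, Or.inl hv⟩
    · push_neg at hA
      refine ⟨u, hu, Or.inr ?_⟩
      exact mem_interior_iff_mem_nhds.mpr
        (Filter.mem_of_superset (hU.mem_nhds hu) hA)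
  have hDzero : D = fun _ => (0 : ℝ) := by
    refine Continuous.ext_on hdense sD.continuous continuous_const ?_
    intro p hp
    rcases hp with hp | hp
    · exact key p hp
    · exact key2 p hp
  have h0 : ψ x * G.dnabla (G.hess ψ) X Y Z x
      - (dDeriv (n := n) ψ X x * G.hess ψ Y Z x
          - dDeriv (n := n) ψ Y x * G.hess ψ X Z x) = 0 := congrFun hDzero x
  linarith [h0]

end Chain4

section Gram

variable {n : ℕ} {M : Type} [TopologicalSpace M] [ChartedSpace (Euc n) M]
  [IsManifold (𝓡 n) (⊤ : ℕ∞) M] (G : RiemannStructure n M)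

open Matrix

lemma smoothFn_sum {ι : Type} (s : Finset ι) (f : ι → M → ℝ)
    (hf : ∀ i ∈ s, SmoothFn (n := n) (f i)) :
    SmoothFn (n := n) (fun p => ∑ i ∈ s, f i p) := by
  classical
  induction s using Finset.induction with
  | empty => simpa using smoothFn_const (n := n) (M := M) 0
  | insert _ _ hni ih =>
      rename_i a s
      have h1 : SmoothFn (n := n) (fun p => f a p + ∑ i ∈ s, f i p) :=
        (hf a (Finset.mem_insert_self a s)).add
          (ih fun i hi => hf i (Finset.mem_insert_of_mem hi))
      simpa [Finset.sum_insert hni] using h1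

lemma smoothFn_prod {ι : Type} (s : Finset ι) (f : ι → M → ℝ)
    (hf : ∀ i ∈ s, SmoothFn (n := n) (f i)) :
    SmoothFn (n := n) (fun p => ∏ i ∈ s, f i p) := by
  classical
  induction s using Finset.induction with
  | empty => simpa using smoothFn_const (n := n) (M := M) 1
  | insert _ _ hni ih =>
      rename_i a s
      have h1 : SmoothFn (n := n) (fun p => f a p * ∏ i ∈ s, f i p) :=
        (hf a (Finset.mem_insert_self a s)).mul
          (ih fun i hi => hf i (Finset.mem_insert_of_mem hi))
      simpa [Finset.prod_insert hni] using h1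

lemma smoothFn_det {N : M → Matrix (Fin n) (Fin n) ℝ}
    (h : ∀ i j, SmoothFn (n := n) (fun x => N x i j)) :
    SmoothFn (n := n) (fun x => (N x).det) := by
  have he : (fun x => (N x).det)
      = fun x => ∑ σ : Equiv.Perm (Fin n),
          (Equiv.Perm.sign σ : ℤ) * ∏ i, N x (σ i) i := by
    funext x
    rw [Matrix.det_apply']
  rw [he]
  refine smoothFn_sum _ _ fun σ _ => ?_
  exact smoothFn_mul' (smoothFn_const _) (smoothFn_prod _ _ fun i _ => h (σ i) i)

/-- The Gram matrix of the standard (constant) frame. -/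
def GramM (x : M) : Matrix (Fin n) (Fin n) ℝ :=
  Matrix.of fun i j => G.g x (EuclideanSpace.single i (1 : ℝ)) (EuclideanSpace.single j (1 : ℝ))

/-- expansion of a bilinear form over coordinates -/
lemma bilin_expand (B : Euc n → Euc n → ℝ)
    (Badd1 : ∀ u v w, B (u + v) w = B u w + B v w)
    (Bsmul1 : ∀ (c : ℝ) u w, B (c • u) w = c * B u w)
    (Badd2 : ∀ u v w, B u (v + w) = B u v + B u w)
    (Bsmul2 : ∀ (c : ℝ) u w, B u (c • w) = c * B u w)
    (u v : Euc n) :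
    B u v = ∑ i, ∑ j, (u i) * ((v j) * B (EuclideanSpace.single i (1 : ℝ))
      (EuclideanSpace.single j (1 : ℝ))) := by
  have hzero1 : ∀ w, B 0 w = 0 := fun w => by
    have := Bsmul1 0 0 w; simpa using this
  have hsum1 : ∀ {ι : Type} (s : Finset ι) (a : ι → Euc n) (w : Euc n),
      B (∑ i ∈ s, a i) w = ∑ i ∈ s, B (a i) w := by
    classical
    intro ι s a w
    induction s using Finset.induction with
    | empty => simpa using hzero1 w
    | insert _ _ hni ih =>
        rename_i c s
        rw [Finset.sum_insert hni, Badd1, ih, Finset.sum_insert hni]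
  have hzero2 : ∀ w, B w 0 = 0 := fun w => by
    have := Bsmul2 0 w 0; simpa using this
  have hsum2 : ∀ {ι : Type} (s : Finset ι) (w : Euc n) (a : ι → Euc n),
      B w (∑ i ∈ s, a i) = ∑ i ∈ s, B w (a i) := by
    classical
    intro ι s w a
    induction s using Finset.induction with
    | empty => simpa using hzero2 w
    | insert _ _ hni ih =>
        rename_i c s
        rw [Finset.sum_insert hni, Badd2, ih, Finset.sum_insert hni]
  conv_lhs => rw [← euc_decomp u]
  rw [hsum1]
  refine Finset.sum_congr rfl fun i _ => ?_
  rw [Bsmul1, ← Finset.mul_sum]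
  congr 1
  conv_lhs => rw [← euc_decomp v]
  rw [hsum2]
  refine Finset.sum_congr rfl fun j _ => ?_
  rw [Bsmul2]

lemma g_bilin_expand (x : M) (u v : Euc n) :
    G.g x u v = ∑ i, ∑ j, (u i) * ((v j) * GramM G x i j) :=
  bilin_expand (G.g x) (G.g_add_left x) (G.g_smul_left x)
    (g_add_right G x) (g_smul_right G x) u v

lemma gram_orth {x : M} {b : Fin n → Euc n}
    (hb : ∀ i j, G.g x (b i) (b j) = if i = j then (1 : ℝ) else 0) :
    (Matrix.of fun k i => b k i) * GramM G x * (Matrix.of fun k i => b k i)ᵀ = 1 := by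
  ext k l
  rw [Matrix.mul_apply]
  have : ∀ j, ((Matrix.of fun k i => b k i) * GramM G x) k j
      = ∑ i, b k i * GramM G x i j := fun j => by
    rw [Matrix.mul_apply]; rfl
  calc (∑ j, ((Matrix.of fun k i => b k i) * GramM G x) k j
        * (Matrix.of fun k i => b k i)ᵀ j l)
      = ∑ j, (∑ i, b k i * GramM G x i j) * b l j := by
        refine Finset.sum_congr rfl fun j _ => ?_
        rw [this j]; rfl
    _ = ∑ i, ∑ j, (b k i) * ((b l j) * GramM G x i j) := by
        rw [Finset.sum_comm]
        refine Finset.sum_congr rfl fun i _ => ?_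
        rw [Finset.sum_mul]
        refine Finset.sum_congr rfl fun j _ => ?_
        ring
    _ = G.g x (b k) (b l) := (g_bilin_expand G x (b k) (b l)).symm
    _ = (1 : Matrix (Fin n) (Fin n) ℝ) k l := by
        rw [hb k l, Matrix.one_apply]

lemma gram_det_ne_zero (x : M) : (GramM G x).det ≠ 0 := by
  obtain ⟨b, hb⟩ := G.onb_exists x
  have h1 := gram_orth G hb
  have h2 := congrArg Matrix.det h1
  rw [Matrix.det_mul, Matrix.det_mul, Matrix.det_one] at h2
  intro h0
  rw [h0] at h2
  simp at h2

lemma gram_inv_eq {x : M} {b : Fin n → Euc n}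
    (hb : ∀ i j, G.g x (b i) (b j) = if i = j then (1 : ℝ) else 0) :
    (GramM G x)⁻¹ = (Matrix.of fun k i => b k i)ᵀ * (Matrix.of fun k i => b k i) := by
  have h1 := gram_orth G hb
  rw [Matrix.mul_assoc] at h1
  have h2 := mul_eq_one_comm.mp h1
  rw [Matrix.mul_assoc] at h2
  exact Matrix.inv_eq_right_inv h2

/-- trace of a bilinear form w.r.t. an ONB, via the inverse Gram matrix -/
lemma trace_onb (B : Euc n → Euc n → ℝ)
    (Badd1 : ∀ u v w, B (u + v) w = B u w + B v w)
    (Bsmul1 : ∀ (c : ℝ) u w, B (c • u) w = c * B u w)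
    (Badd2 : ∀ u v w, B u (v + w) = B u v + B u w)
    (Bsmul2 : ∀ (c : ℝ) u w, B u (c • w) = c * B u w)
    {x : M} {b : Fin n → Euc n}
    (hb : ∀ i j, G.g x (b i) (b j) = if i = j then (1 : ℝ) else 0) :
    ∑ k, B (b k) (b k) = ∑ i, ∑ j, (GramM G x)⁻¹ i j
      * B (EuclideanSpace.single i (1 : ℝ)) (EuclideanSpace.single j (1 : ℝ)) := by
  rw [gram_inv_eq G hb]
  calc ∑ k, B (b k) (b k)
      = ∑ k, ∑ i, ∑ j, (b k i) * ((b k j) * B (EuclideanSpace.single i (1 : ℝ))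
          (EuclideanSpace.single j (1 : ℝ))) := by
        exact Finset.sum_congr rfl fun k _ =>
          bilin_expand B Badd1 Bsmul1 Badd2 Bsmul2 (b k) (b k)
    _ = ∑ i, ∑ j, (∑ k, b k i * b k j) * B (EuclideanSpace.single i (1 : ℝ))
          (EuclideanSpace.single j (1 : ℝ)) := by
        rw [Finset.sum_comm]
        refine Finset.sum_congr rfl fun i _ => ?_
        rw [Finset.sum_comm]
        refine Finset.sum_congr rfl fun j _ => ?_
        rw [Finset.sum_mul]
        refine Finset.sum_congr rfl fun k _ => ?_
        ring
    _ = _ := by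
        refine Finset.sum_congr rfl fun i _ => Finset.sum_congr rfl fun j _ => ?_
        have hm : ((Matrix.of fun k i => b k i)ᵀ * (Matrix.of fun k i => b k i)) i j
            = ∑ k, b k i * b k j := by
          rw [Matrix.mul_apply]
          rfl
        rw [hm]

lemma smooth_gram_inv (i j : Fin n) :
    SmoothFn (n := n) (fun x => (GramM G x)⁻¹ i j) := by
  have hentries : ∀ k l, SmoothFn (n := n) (fun x => GramM G x k l) := fun k l =>
    G.g_smooth _ _ (smoothVF_const _) (smoothVF_const _)
  have hdet : SmoothFn (n := n) (fun x => (GramM G x).det) := smoothFn_det hentries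
  have hadj : SmoothFn (n := n) (fun x => (GramM G x).adjugate i j) := by
    have he : (fun x => (GramM G x).adjugate i j)
        = fun x => ((GramM G x).updateRow j (Pi.single i 1)).det := by
      funext x; rw [Matrix.adjugate_apply]
    rw [he]
    refine smoothFn_det fun k l => ?_
    by_cases hk : k = j
    · subst hk
      have : (fun x => ((GramM G x).updateRow k (Pi.single i 1)) k l)
          = fun _ : M => (Pi.single i (1:ℝ) : Fin n → ℝ) l := by
        funext x; rw [Matrix.updateRow_self]
      rw [this]
      exact smoothFn_const _
    · have : (fun x => ((GramM G x).updateRow j (Pi.single i 1)) k l)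
          = fun x => GramM G x k l := by
        funext x; rw [Matrix.updateRow_ne hk]
      rw [this]
      exact hentries k l
  have he2 : (fun x => (GramM G x)⁻¹ i j)
      = fun x => ((GramM G x).det)⁻¹ * (GramM G x).adjugate i j := by
    funext x
    rw [Matrix.inv_def, Ring.inverse_eq_inv]
    rfl
  rw [he2]
  exact smoothFn_mul' (hdet.inv₀ (gram_det_ne_zero G)) hadj

end Gram

section RicLapl

variable {n : ℕ} {M : Type} [TopologicalSpace M] [ChartedSpace (Euc n) M]
  [IsManifold (𝓡 n) (⊤ : ℕ∞) M] (G : RiemannStructure n M)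

lemma hess_add_fst (f : M → ℝ) (W : M → Euc n) (u v : Euc n) (x : M) :
    G.hess f (fun _ => u + v) W x
      = G.hess f (fun _ => u) W x + G.hess f (fun _ => v) W x := by
  have h1 := dDeriv_field_add (n := n) (dDeriv (n := n) f W)
    (fun _ : M => u) (fun _ : M => v) x
  have h2 : G.conn (fun _ : M => u + v) W x
      = G.conn (fun _ : M => u) W x + G.conn (fun _ : M => v) W x := by
    have e : (fun _ : M => u + v) = (fun _ : M => u) + (fun _ : M => v) := rfl
    rw [e, G.conn_add_fst]
  show dDeriv (n := n) (dDeriv (n := n) f W) (fun _ => u + v) x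
      - dDeriv (n := n) f (G.conn (fun _ => u + v) W) x = _
  rw [h1, dDeriv_congr_field (n := n) f (X := G.conn (fun _ : M => u + v) W)
      (X' := fun p => G.conn (fun _ : M => u) W p + G.conn (fun _ : M => v) W p)
      (x := x) h2,
    dDeriv_field_add]
  show _ = dDeriv (n := n) (dDeriv (n := n) f W) (fun _ => u) x
      - dDeriv (n := n) f (G.conn (fun _ => u) W) x
    + (dDeriv (n := n) (dDeriv (n := n) f W) (fun _ => v) x
      - dDeriv (n := n) f (G.conn (fun _ => v) W) x)
  ring

lemma hess_smul_fst (f : M → ℝ) (W : M → Euc n) (c : ℝ) (u : Euc n) (x : M) :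
    G.hess f (fun _ => c • u) W x = c * G.hess f (fun _ => u) W x := by
  have h1 := dDeriv_field_smul (n := n) (dDeriv (n := n) f W)
    (fun _ : M => c) (fun _ : M => u) x
  have h2 : G.conn (fun _ : M => c • u) W x = c • G.conn (fun _ : M => u) W x :=
    G.conn_smul_fst (fun _ => c) (fun _ => u) W x
  show dDeriv (n := n) (dDeriv (n := n) f W) (fun _ => c • u) x
      - dDeriv (n := n) f (G.conn (fun _ => c • u) W) x = _
  rw [h1, dDeriv_congr_field (n := n) f (X := G.conn (fun _ : M => c • u) W)
      (X' := fun p => c • G.conn (fun _ : M => u) W p) (x := x) h2,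
    dDeriv_field_smul (n := n) f (fun _ => c)]
  show _ = c * (dDeriv (n := n) (dDeriv (n := n) f W) (fun _ => u) x
      - dDeriv (n := n) f (G.conn (fun _ => u) W) x)
  ring

lemma hess_add_snd (hn : 0 < n) {f : M → ℝ} (hf : SmoothFn (n := n) f)
    (U : M → Euc n) (v w : Euc n) (x : M) :
    G.hess f U (fun _ => v + w) x
      = G.hess f U (fun _ => v) x + G.hess f U (fun _ => w) x := by
  have e1 : dDeriv (n := n) f (fun _ : M => v + w)
      = fun p => dDeriv (n := n) f (fun _ : M => v) p + dDeriv (n := n) f (fun _ : M => w) p :=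
    funext fun p => dDeriv_field_add (n := n) f (fun _ => v) (fun _ => w) p
  have e2 : G.conn U (fun _ : M => v + w) x
      = G.conn U (fun _ : M => v) x + G.conn U (fun _ : M => w) x := by
    have e : (fun _ : M => v + w) = (fun _ : M => v) + (fun _ : M => w) := rfl
    rw [e, G.conn_add_snd U _ _ (smoothVF_const v) (smoothVF_const w)]
  show dDeriv (n := n) (dDeriv (n := n) f (fun _ => v + w)) U x
      - dDeriv (n := n) f (G.conn U (fun _ => v + w)) x = _
  rw [e1, dDeriv_add U (smoothFn_mdiff (smooth_dDeriv G hn hf (smoothVF_const v)) x)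
      (smoothFn_mdiff (smooth_dDeriv G hn hf (smoothVF_const w)) x),
    dDeriv_congr_field (n := n) f (X := G.conn U (fun _ : M => v + w))
      (X' := fun p => G.conn U (fun _ : M => v) p + G.conn U (fun _ : M => w) p)
      (x := x) e2,
    dDeriv_field_add]
  show _ = dDeriv (n := n) (dDeriv (n := n) f (fun _ => v)) U x
      - dDeriv (n := n) f (G.conn U (fun _ => v)) x
    + (dDeriv (n := n) (dDeriv (n := n) f (fun _ => w)) U x
      - dDeriv (n := n) f (G.conn U (fun _ => w)) x)
  ring

lemma hess_smul_snd (hn : 0 < n) {f : M → ℝ} (hf : SmoothFn (n := n) f)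
    (U : M → Euc n) (c : ℝ) (w : Euc n) (x : M) :
    G.hess f U (fun _ => c • w) x = c * G.hess f U (fun _ => w) x := by
  have e1 : dDeriv (n := n) f (fun _ : M => c • w)
      = fun p => (fun _ : M => c) p * dDeriv (n := n) f (fun _ : M => w) p :=
    funext fun p => dDeriv_field_smul (n := n) f (fun _ => c) (fun _ => w) p
  have e2 : G.conn U (fun _ : M => c • w) x = c • G.conn U (fun _ : M => w) x := by
    have e : (fun _ : M => c • w) = (fun p : M => c • (fun _ : M => w) p) := rfl
    rw [e, conn_smul_const_snd G U _ (smoothVF_const w) c x]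
  show dDeriv (n := n) (dDeriv (n := n) f (fun _ => c • w)) U x
      - dDeriv (n := n) f (G.conn U (fun _ => c • w)) x = _
  rw [e1, dDeriv_mul U (smoothFn_mdiff (smoothFn_const c) x)
      (smoothFn_mdiff (smooth_dDeriv G hn hf (smoothVF_const w)) x),
    dDeriv_congr_field (n := n) f (X := G.conn U (fun _ : M => c • w))
      (X' := fun p => c • G.conn U (fun _ : M => w) p) (x := x) e2,
    dDeriv_field_smul (n := n) f (fun _ => c), dDeriv_const]
  show _ = c * (dDeriv (n := n) (dDeriv (n := n) f (fun _ => w)) U x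
      - dDeriv (n := n) f (G.conn U (fun _ => w)) x)
  ring

lemma lapl_eq (hn : 0 < n) {f : M → ℝ} (hf : SmoothFn (n := n) f) (x : M) :
    G.lapl f x = -∑ i, ∑ j, (GramM G x)⁻¹ i j
      * G.hess f (fun _ => EuclideanSpace.single i (1 : ℝ))
          (fun _ => EuclideanSpace.single j (1 : ℝ)) x := by
  obtain ⟨b, hb⟩ := G.onb_exists x
  rw [G.lapl_spec f hf x b hb]
  congr 1
  have ht := trace_onb G (fun u v => G.hess f (fun _ => u) (fun _ => v) x)
    (fun u v w => hess_add_fst G f (fun _ => w) u v x)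
    (fun c u w => hess_smul_fst G f (fun _ => w) c u x)
    (fun u v w => hess_add_snd G hn hf (fun _ => u) v w x)
    (fun c u w => hess_smul_snd G hn hf (fun _ => u) c w x) hb
  exact ht

lemma smooth_lapl (hn : 0 < n) {f : M → ℝ} (hf : SmoothFn (n := n) f) :
    SmoothFn (n := n) (G.lapl f) := by
  have he : G.lapl f = fun x => -∑ i, ∑ j, (GramM G x)⁻¹ i j
      * G.hess f (fun _ => EuclideanSpace.single i (1 : ℝ))
          (fun _ => EuclideanSpace.single j (1 : ℝ)) x :=
    funext fun x => lapl_eq G hn hf x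
  rw [he]
  refine ContMDiff.neg ?_
  refine smoothFn_sum _ _ fun i _ => smoothFn_sum _ _ fun j _ => ?_
  exact smoothFn_mul' (smooth_gram_inv G i j)
    (smooth_hess G hn hf (smoothVF_const _) (smoothVF_const _))

end RicLapl

section Ric

variable {n : ℕ} {M : Type} [TopologicalSpace M] [ChartedSpace (Euc n) M]
  [IsManifold (𝓡 n) (⊤ : ℕ∞) M] (G : RiemannStructure n M)
  {Y Z : M → Euc n}

/-- the `Ric`-integrand field `R(u, Y)Z` for a constant direction `u` -/
def curvC (Y Z : M → Euc n) (u : Euc n) : M → Euc n := fun p =>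
  G.conn (fun _ => u) (G.conn Y Z) p - G.conn Y (G.conn (fun _ => u) Z) p
    - G.conn (fun q => G.conn (fun _ => u) Y q - G.conn Y (fun _ => u) q) Z p

lemma curvC_smooth (hY : SmoothVF (n := n) Y) (hZ : SmoothVF (n := n) Z) (u : Euc n) :
    SmoothVF (n := n) (curvC G Y Z u) :=
  ((G.conn_smooth _ _ (smoothVF_const u) (G.conn_smooth Y Z hY hZ)).sub
    (G.conn_smooth _ _ hY (G.conn_smooth _ Z (smoothVF_const u) hZ))).sub
    (G.conn_smooth _ _ ((G.conn_smooth _ Y (smoothVF_const u) hY).sub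
      (G.conn_smooth Y _ hY (smoothVF_const u))) hZ)

lemma curvC_add (hY : SmoothVF (n := n) Y) (hZ : SmoothVF (n := n) Z) (u v : Euc n) (x : M) :
    curvC G Y Z (u + v) x = curvC G Y Z u x + curvC G Y Z v x := by
  have ecv : (fun _ : M => u + v) = (fun _ : M => u) + (fun _ : M => v) := rfl
  have t1 : G.conn (fun _ : M => u + v) (G.conn Y Z) x
      = G.conn (fun _ => u) (G.conn Y Z) x + G.conn (fun _ => v) (G.conn Y Z) x := by
    rw [ecv, G.conn_add_fst]
  have einner : G.conn (fun _ : M => u + v) Z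
      = (G.conn (fun _ : M => u) Z) + (G.conn (fun _ : M => v) Z) := by
    funext q
    rw [ecv, G.conn_add_fst]
    rfl
  have t2 : G.conn Y (G.conn (fun _ : M => u + v) Z) x
      = G.conn Y (G.conn (fun _ => u) Z) x + G.conn Y (G.conn (fun _ => v) Z) x := by
    rw [einner, G.conn_add_snd Y _ _ (G.conn_smooth _ Z (smoothVF_const u) hZ)
      (G.conn_smooth _ Z (smoothVF_const v) hZ)]
  have einner2 : (fun q => G.conn (fun _ : M => u + v) Y q - G.conn Y (fun _ : M => u + v) q)
      = (fun q => G.conn (fun _ : M => u) Y q - G.conn Y (fun _ : M => u) q)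
        + (fun q => G.conn (fun _ : M => v) Y q - G.conn Y (fun _ : M => v) q) := by
    funext q
    show G.conn (fun _ : M => u + v) Y q - G.conn Y (fun _ : M => u + v) q = _
    rw [ecv, G.conn_add_fst, G.conn_add_snd Y _ _ (smoothVF_const u) (smoothVF_const v)]
    show _ = G.conn (fun _ : M => u) Y q - G.conn Y (fun _ : M => u) q
      + (G.conn (fun _ : M => v) Y q - G.conn Y (fun _ : M => v) q)
    abel
  have t3 : G.conn (fun q => G.conn (fun _ : M => u + v) Y q
        - G.conn Y (fun _ : M => u + v) q) Z x
      = G.conn (fun q => G.conn (fun _ : M => u) Y q - G.conn Y (fun _ : M => u) q) Z x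
        + G.conn (fun q => G.conn (fun _ : M => v) Y q - G.conn Y (fun _ : M => v) q) Z x := by
    rw [einner2, G.conn_add_fst]
  show G.conn (fun _ : M => u + v) (G.conn Y Z) x
      - G.conn Y (G.conn (fun _ : M => u + v) Z) x
      - G.conn (fun q => G.conn (fun _ : M => u + v) Y q
          - G.conn Y (fun _ : M => u + v) q) Z x = _
  rw [t1, t2, t3]
  show _ = G.conn (fun _ : M => u) (G.conn Y Z) x - G.conn Y (G.conn (fun _ : M => u) Z) x
      - G.conn (fun q => G.conn (fun _ : M => u) Y q - G.conn Y (fun _ : M => u) q) Z x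
    + (G.conn (fun _ : M => v) (G.conn Y Z) x - G.conn Y (G.conn (fun _ : M => v) Z) x
      - G.conn (fun q => G.conn (fun _ : M => v) Y q - G.conn Y (fun _ : M => v) q) Z x)
  abel

lemma curvC_smul (hY : SmoothVF (n := n) Y) (hZ : SmoothVF (n := n) Z) (c : ℝ) (u : Euc n)
    (x : M) : curvC G Y Z (c • u) x = c • curvC G Y Z u x := by
  have ecv : (fun _ : M => c • u) = (fun p : M => (fun _ : M => c) p • (fun _ : M => u) p) := rfl
  have t1 : G.conn (fun _ : M => c • u) (G.conn Y Z) x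
      = c • G.conn (fun _ => u) (G.conn Y Z) x := by
    rw [ecv, G.conn_smul_fst]
  have einner : G.conn (fun _ : M => c • u) Z
      = fun q => c • (G.conn (fun _ : M => u) Z) q := by
    funext q
    rw [ecv, G.conn_smul_fst]
  have t2 : G.conn Y (G.conn (fun _ : M => c • u) Z) x
      = c • G.conn Y (G.conn (fun _ => u) Z) x := by
    rw [einner, conn_smul_const_snd G Y _ (G.conn_smooth _ Z (smoothVF_const u) hZ) c x]
  have einner2 : (fun q => G.conn (fun _ : M => c • u) Y q - G.conn Y (fun _ : M => c • u) q)
      = (fun q => c • (G.conn (fun _ : M => u) Y q - G.conn Y (fun _ : M => u) q)) := by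
    funext q
    rw [ecv, G.conn_smul_fst, conn_smul_const_snd G Y _ (smoothVF_const u) c q, smul_sub]
  have t3 : G.conn (fun q => G.conn (fun _ : M => c • u) Y q
        - G.conn Y (fun _ : M => c • u) q) Z x
      = c • G.conn (fun q => G.conn (fun _ : M => u) Y q - G.conn Y (fun _ : M => u) q) Z x := by
    rw [einner2]
    exact G.conn_smul_fst (fun _ => c) _ Z x
  show G.conn (fun _ : M => c • u) (G.conn Y Z) x
      - G.conn Y (G.conn (fun _ : M => c • u) Z) x
      - G.conn (fun q => G.conn (fun _ : M => c • u) Y q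
          - G.conn Y (fun _ : M => c • u) q) Z x = _
  rw [t1, t2, t3]
  show _ = c • (G.conn (fun _ : M => u) (G.conn Y Z) x - G.conn Y (G.conn (fun _ : M => u) Z) x
      - G.conn (fun q => G.conn (fun _ : M => u) Y q - G.conn Y (fun _ : M => u) q) Z x)
  rw [smul_sub, smul_sub]

lemma ric_eq (hY : SmoothVF (n := n) Y) (hZ : SmoothVF (n := n) Z) (x : M) :
    G.ric x (Y x) (Z x) = ∑ i, ∑ j, (GramM G x)⁻¹ i j
      * G.g x (curvC G Y Z (EuclideanSpace.single i (1 : ℝ)) x)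
          (EuclideanSpace.single j (1 : ℝ)) := by
  obtain ⟨b, hb⟩ := G.onb_exists x
  rw [G.ric_spec x b hb Y Z hY hZ]
  have ht := trace_onb G (fun u w => G.g x (curvC G Y Z u x) w)
    (fun u v w => by show G.g x (curvC G Y Z (u + v) x) w = _; rw [curvC_add G hY hZ u v x, G.g_add_left])
    (fun c u w => by show G.g x (curvC G Y Z (c • u) x) w = _; rw [curvC_smul G hY hZ c u x, G.g_smul_left])
    (fun u v w => g_add_right G x _ v w)
    (fun c u w => g_smul_right G x c _ w) hb
  exact ht

lemma smooth_ricT (hY : SmoothVF (n := n) Y) (hZ : SmoothVF (n := n) Z) :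
    SmoothFn (n := n) (fun x => G.ric x (Y x) (Z x)) := by
  have he : (fun x => G.ric x (Y x) (Z x)) = fun x => ∑ i, ∑ j, (GramM G x)⁻¹ i j
      * G.g x (curvC G Y Z (EuclideanSpace.single i (1 : ℝ)) x)
          (EuclideanSpace.single j (1 : ℝ)) :=
    funext fun x => ric_eq G hY hZ x
  rw [he]
  refine smoothFn_sum _ _ fun i _ => smoothFn_sum _ _ fun j _ => ?_
  exact smoothFn_mul' (smooth_gram_inv G i j)
    (G.g_smooth _ _ (curvC_smooth G hY hZ _) (smoothVF_const _))

end Ric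

section Final

variable {n : ℕ} {M : Type} [TopologicalSpace M] [ChartedSpace (Euc n) M]
  [IsManifold (𝓡 n) (⊤ : ℕ∞) M] (G : RiemannStructure n M)

lemma stmt6_aux (hn : 2 ≤ n)
    (ψ : M → ℝ) (hψs : SmoothFn (n := n) ψ)
    (A : M → Euc n) (hAs : SmoothVF (n := n) A)
    (hcc : ∀ (X : M → Euc n) (x : M), G.conn X A x = ψ x • X x) :
    ∀ X Y Z : M → Euc n, SmoothVF (n := n) X → SmoothVF (n := n) Y → SmoothVF (n := n) Z →
      ∀ x : M,
        ψ x * G.dnabla (G.Ustar ψ) X Y Z x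
          = (dDeriv (n := n) ψ X x * G.Ustar ψ Y Z x
              - dDeriv (n := n) ψ Y x * G.Ustar ψ X Z x)
            - ψ x ^ 2 * G.dnabla G.ricT X Y Z x
            + ((ψ x * dDeriv (n := n) (G.lapl ψ) X x
                - G.lapl ψ x * dDeriv (n := n) ψ X x) * G.g x (Y x) (Z x)
              - (ψ x * dDeriv (n := n) (G.lapl ψ) Y x
                - G.lapl ψ x * dDeriv (n := n) ψ Y x) * G.g x (X x) (Z x)) := by
  intro X Y Z hX hY hZ x
  have hn0 : 0 < n := by omega
  have sΛ : SmoothFn (n := n) (G.lapl ψ) := smooth_lapl G hn0 hψs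
  have expand : ∀ P Q : M → Euc n, SmoothVF (n := n) P → SmoothVF (n := n) Q →
      dDeriv (n := n) (fun p => G.Ustar ψ Q Z p) P x
      = dDeriv (n := n) (fun p => G.hess ψ Q Z p) P x
        - (ψ x * dDeriv (n := n) (fun p => G.ric p (Q p) (Z p)) P x
            + G.ric x (Q x) (Z x) * dDeriv (n := n) ψ P x)
        + (G.lapl ψ x * (G.g x (G.conn P Q x) (Z x) + G.g x (Q x) (G.conn P Z x))
            + G.g x (Q x) (Z x) * dDeriv (n := n) (G.lapl ψ) P x) := by
    intro P Q hP hQ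
    have e : (fun p => G.Ustar ψ Q Z p)
        = fun p => (G.hess ψ Q Z p - ψ p * G.ric p (Q p) (Z p))
            + G.lapl ψ p * G.g p (Q p) (Z p) := rfl
    rw [e, dDeriv_add P
        (smoothFn_mdiff (smoothFn_sub' (smooth_hess G hn0 hψs hQ hZ)
          (smoothFn_mul' hψs (smooth_ricT G hQ hZ))) x)
        (smoothFn_mdiff (smoothFn_mul' sΛ (G.g_smooth Q Z hQ hZ)) x),
      dDeriv_sub P (smoothFn_mdiff (smooth_hess G hn0 hψs hQ hZ) x)
        (smoothFn_mdiff (smoothFn_mul' hψs (smooth_ricT G hQ hZ)) x),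
      dDeriv_mul (f := ψ) (h := fun p => G.ric p (Q p) (Z p)) P
        (smoothFn_mdiff hψs x) (smoothFn_mdiff (smooth_ricT G hQ hZ) x),
      dDeriv_mul (f := G.lapl ψ) (h := fun p => G.g p (Q p) (Z p)) P
        (smoothFn_mdiff sΛ x) (smoothFn_mdiff (G.g_smooth Q Z hQ hZ) x),
      G.conn_metric P Q Z hP hQ hZ x]
  have eXY := expand X Y hX hY
  have eYX := expand Y X hY hX
  have star := star_all G hn0 hψs hAs hcc hX hY hZ x
  have d1 : G.dnabla (G.Ustar ψ) X Y Z x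
      = (dDeriv (n := n) (fun p => G.Ustar ψ Y Z p) X x
          - (G.hess ψ (G.conn X Y) Z x - ψ x * G.ric x (G.conn X Y x) (Z x)
              + G.lapl ψ x * G.g x (G.conn X Y x) (Z x))
          - (G.hess ψ Y (G.conn X Z) x - ψ x * G.ric x (Y x) (G.conn X Z x)
              + G.lapl ψ x * G.g x (Y x) (G.conn X Z x)))
        - (dDeriv (n := n) (fun p => G.Ustar ψ X Z p) Y x
          - (G.hess ψ (G.conn Y X) Z x - ψ x * G.ric x (G.conn Y X x) (Z x)
              + G.lapl ψ x * G.g x (G.conn Y X x) (Z x))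
          - (G.hess ψ X (G.conn Y Z) x - ψ x * G.ric x (X x) (G.conn Y Z x)
              + G.lapl ψ x * G.g x (X x) (G.conn Y Z x))) := rfl
  have d2 : G.dnabla G.ricT X Y Z x
      = (dDeriv (n := n) (fun p => G.ric p (Y p) (Z p)) X x
          - G.ric x (G.conn X Y x) (Z x) - G.ric x (Y x) (G.conn X Z x))
        - (dDeriv (n := n) (fun p => G.ric p (X p) (Z p)) Y x
          - G.ric x (G.conn Y X x) (Z x) - G.ric x (X x) (G.conn Y Z x)) := rfl
  have d3 : G.dnabla (G.hess ψ) X Y Z x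
      = (dDeriv (n := n) (fun p => G.hess ψ Y Z p) X x
          - G.hess ψ (G.conn X Y) Z x - G.hess ψ Y (G.conn X Z) x)
        - (dDeriv (n := n) (fun p => G.hess ψ X Z p) Y x
          - G.hess ψ (G.conn Y X) Z x - G.hess ψ X (G.conn Y Z) x) := rfl
  have u5 : G.Ustar ψ Y Z x = G.hess ψ Y Z x - ψ x * G.ric x (Y x) (Z x)
      + G.lapl ψ x * G.g x (Y x) (Z x) := rfl
  have u6 : G.Ustar ψ X Z x = G.hess ψ X Z x - ψ x * G.ric x (X x) (Z x)
      + G.lapl ψ x * G.g x (X x) (Z x) := rfl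
  linear_combination ψ x * d1 + ψ x * eXY - ψ x * eYX
    - dDeriv (n := n) ψ X x * u5 + dDeriv (n := n) ψ Y x * u6
    + ψ x ^ 2 * d2 - ψ x * d3 + star

end Final


/-- `ψ d^∇ U*_g(ψ) = dψ ∧ U*_g(ψ) - ψ² d^∇ Ric + (ψ d(Δψ) - (Δψ) dψ) ∧ g`
for a closed conformal Killing non-isometric one-form `α` (identified with its dual
vector field `A`), `∇α = ψ g`, `ψ ≢ 0`. -/
theorem stmt6 {n : ℕ} (hn : 2 ≤ n) {M : Type} [TopologicalSpace M] [T2Space M]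
    [ChartedSpace (Euc n) M] [IsManifold (𝓡 n) (⊤ : ℕ∞) M]
    [CompactSpace M] [ConnectedSpace M] (G : RiemannStructure n M)
    (ψ : M → ℝ) (hψs : SmoothFn (n := n) ψ) (hψ : ψ ≠ 0)
    (A : M → Euc n) (hAs : SmoothVF (n := n) A)
    -- `∇α = ψ g`, with `α` identified with its dual vector field `A`
    (hcc : ∀ (X : M → Euc n) (x : M), G.conn X A x = ψ x • X x) :
    ∀ X Y Z : M → Euc n, SmoothVF (n := n) X → SmoothVF (n := n) Y → SmoothVF (n := n) Z →
      ∀ x : M,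
        ψ x * G.dnabla (G.Ustar ψ) X Y Z x
          = (dDeriv (n := n) ψ X x * G.Ustar ψ Y Z x
              - dDeriv (n := n) ψ Y x * G.Ustar ψ X Z x)
            - ψ x ^ 2 * G.dnabla G.ricT X Y Z x
            + ((ψ x * dDeriv (n := n) (G.lapl ψ) X x
                - G.lapl ψ x * dDeriv (n := n) ψ X x) * G.g x (Y x) (Z x)
              - (ψ x * dDeriv (n := n) (G.lapl ψ) Y x
                - G.lapl ψ x * dDeriv (n := n) ψ Y x) * G.g x (X x) (Z x)) := by
  exact stmt6_aux G hn ψ hψs A hAs hcc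

end
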